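/- Fix an integer n ≥ 1 and q ∈ (−1,1], and let f ∈ L²(ℝ₊ⁿ) be symmetric. Then Σ_{σ∈S_{2n}, σ({1,…,n})={1,…,n}} q^{inv(σ)} ∫_{P₂(σ)} (f⊗f) ⊗ (f⊗f) = ⟨f,f⟩_q², where P₂(σ), for σ ∈ S_{2n}, is the pairing {{2n+1−i, 2n+σ(i)} : 1≤i≤2n} of {1,…,4n} and (f⊗f)(t₁,…,t_{2n}) := f(t₁,…,tₙ)f(t_{n+1},…,t_{2n}). -/

import Mathlib

open MeasureTheory

noncomputable section

/-- Lebesgue measure restricted to `ℝ₊ = [0,∞)`. -/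
def mR : Measure ℝ := volume.restrict (Set.Ici (0 : ℝ))

/-- Lebesgue measure on `ℝ₊ⁿ`. -/
def μn (n : ℕ) : Measure (Fin n → ℝ) := Measure.pi fun _ => mR

/-- Number of inversions of a map `σ : Fin p → Fin m`:
`inv(σ) = Card {i < j : σ i > σ j}`. -/
def invCount {p m : ℕ} (σ : Fin p → Fin m) : ℕ :=
  (Finset.univ.filter fun ij : Fin p × Fin p => ij.1 < ij.2 ∧ σ ij.2 < σ ij.1).card

/-- The `q`-inner product
`⟨f,g⟩_q = Σ_{σ ∈ S_n} q^{inv σ} ∫ f(t_{σ(1)},…,t_{σ(n)}) g(t₁,…,t_n) dt`. -/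
def qInner (n : ℕ) (q : ℝ) (f g : (Fin n → ℝ) → ℝ) : ℝ :=
  ∑ σ : Equiv.Perm (Fin n),
    q ^ invCount (fun i => σ i) * ∫ t, f (fun i => t (σ i)) * g t ∂ μn n

/-- `f*`, the mirror of `f` : `f*(t₁,…,tₙ) = f(tₙ,…,t₁)`. -/
def mirror {n : ℕ} (f : (Fin n → ℝ) → ℝ) : (Fin n → ℝ) → ℝ := fun t => f fun i => t i.rev

/-- The pairing integral `∫_{P₂(σ)} F ⊗ H` associated with the pairing
`P₂(σ) = {{N+1-i, N+σ(i)} : 1 ≤ i ≤ N}` of `{1,…,2N}`, namely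
`∫ F(s₁,…,s_N) H(s_{N+1-σ⁻¹(1)},…,s_{N+1-σ⁻¹(N)}) ds`. -/
def P2Integral (N : ℕ) (σ : Equiv.Perm (Fin N)) (F H : (Fin N → ℝ) → ℝ) : ℝ :=
  ∫ s, F s * H (fun i => s (σ.symm i).rev) ∂ μn N

/-- `f` is symmetric: for every permutation `σ`, `f(t_{σ(1)},…,t_{σ(n)}) = f(t₁,…,tₙ)`
for almost every `t`. -/
def SymmFn {n : ℕ} (f : (Fin n → ℝ) → ℝ) : Prop :=
  ∀ σ : Equiv.Perm (Fin n), ∀ᵐ t ∂ μn n, f (fun i => t (σ i)) = f t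

/-- Safe coordinate access: `gv t k = t k` when `k < m`, and `0` otherwise. -/
def gv {m : ℕ} (t : Fin m → ℝ) (k : ℕ) : ℝ := if h : k < m then t ⟨k, h⟩ else 0

/-- The `p`-th contraction `f ⌢_p g`:
`(f ⌢_p g)(t₁,…,t_{n+m-2p}) = ∫ f(t₁,…,t_{n-p},s_p,…,s₁) g(s₁,…,s_p,t_{n-p+1},…,t_{n+m-2p}) ds`. -/
def contr (n m p : ℕ) (f : (Fin n → ℝ) → ℝ) (g : (Fin m → ℝ) → ℝ) :
    (Fin (n + m - 2 * p) → ℝ) → ℝ :=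
  fun t => ∫ s : Fin p → ℝ,
      f (fun i => if (i : ℕ) < n - p then gv t i else gv s (n - 1 - (i : ℕ))) *
      g (fun j => if (j : ℕ) < p then gv s j else gv t (n - p + ((j : ℕ) - p))) ∂ μn p

/-- `α(σ)` for a (strictly decreasing, 0-indexed) `σ : Fin p → Fin n`;
in 1-indexed terms `α(σ) = Σᵢ (n+1-σ(i)) - p(p+1)/2`. -/
def alphaA (n p : ℕ) (σ : Fin p → Fin n) : ℕ := (∑ i, (n - (σ i : ℕ))) - p * (p + 1) / 2

/-- `β(σ)` for an (injective, 0-indexed) `σ : Fin p → Fin n`;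
in 1-indexed terms `β(σ) = Σᵢ σ(i) - p(p+1)/2 + inv(σ)`. -/
def betaB (n p : ℕ) (σ : Fin p → Fin n) : ℕ :=
  ((∑ i, (σ i : ℕ)) - p * (p - 1) / 2) + invCount σ

/-- `f_q^{(p)}`, as a function of `(t₁,…,t_{n-p},s_p,…,s₁)`:
`Σ_{σ : {1,…,p} → {1,…,n} strictly decreasing} q^{α(σ)} f(x₁,…,xₙ)` where `x_{σ(i)} = s_i`
and the remaining coordinates, read increasingly, are `t₁,…,t_{n-p}`. -/
def qexpDec (n p : ℕ) (q : ℝ) (f : (Fin n → ℝ) → ℝ) : (Fin n → ℝ) → ℝ :=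
  fun u => ∑ σ ∈ Finset.univ.filter (fun σ : Fin p → Fin n => ∀ i j : Fin p, i < j → σ j < σ i),
    q ^ alphaA n p σ * f (fun j =>
      if ∃ i, σ i = j then
        ∑ i ∈ Finset.univ.filter (fun i => σ i = j), gv u (n - 1 - (i : ℕ))
      else gv u ((Finset.univ.filter fun j' : Fin n => j' < j ∧ ∀ i, σ i ≠ j').card))

/-- `f_q^{[p]}`, as a function of `(s₁,…,s_p,t₁,…,t_{n-p})`:
`Σ_{σ : {1,…,p} → {1,…,n} injective} q^{β(σ)} f(x₁,…,xₙ)` where `x_{σ(i)} = s_i`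
and the remaining coordinates, read increasingly, are `t₁,…,t_{n-p}`. -/
def qexpInj (n p : ℕ) (q : ℝ) (f : (Fin n → ℝ) → ℝ) : (Fin n → ℝ) → ℝ :=
  fun u => ∑ σ ∈ Finset.univ.filter (fun σ : Fin p → Fin n => Function.Injective σ),
    q ^ betaB n p σ * f (fun j =>
      if ∃ i, σ i = j then
        ∑ i ∈ Finset.univ.filter (fun i => σ i = j), gv u (i : ℕ)
      else gv u (p + (Finset.univ.filter fun j' : Fin n => j' < j ∧ ∀ i, σ i ≠ j').card))

/-- The `q`-contraction `f ⊗_q^p g := f_q^{(p)} ⌢_p g_q^{[p]}`. -/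
def qcontr (n m p : ℕ) (q : ℝ) (f : (Fin n → ℝ) → ℝ) (g : (Fin m → ℝ) → ℝ) :
    (Fin (n + m - 2 * p) → ℝ) → ℝ :=
  contr n m p (qexpDec n p q f) (qexpInj m p q g)

/-- Two (2-element) sets form a crossing: `{x₁,y₁}, {x₂,y₂}` with `x₁ < x₂ < y₁ < y₂`. -/
def Crossing (p₁ p₂ : Finset ℕ) : Prop :=
  ∃ x₁ ∈ p₁, ∃ y₁ ∈ p₁, ∃ x₂ ∈ p₂, ∃ y₂ ∈ p₂, x₁ < x₂ ∧ x₂ < y₁ ∧ y₁ < y₂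

/-- The number of crossings `Cr(π)` of a pairing `π` (each crossing counted once:
the pair containing the smallest point is listed first). -/
def crNum (π : Finset (Finset ℕ)) : ℕ := by
  classical exact ((π ×ˢ π).filter fun pp => Crossing pp.1 pp.2).card

/-- `π` is a pairing of `{0,…,N-1}`: a partition of it into 2-element sets. -/
def IsPairingOn (N : ℕ) (π : Finset (Finset ℕ)) : Prop :=
  (∀ pr ∈ π, pr.card = 2 ∧ pr ⊆ Finset.range N) ∧ ∀ x < N, ∃! pr, pr ∈ π ∧ x ∈ pr

/-- `off n i = n₁ + … + nᵢ`, the offset of the `(i+1)`-th block. -/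
def off (n : ℕ → ℕ) (i : ℕ) : ℕ := ∑ j ∈ Finset.range i, n j

/-- `π ∈ C₂(n₁ ⊗ … ⊗ n_r)`: `π` is a pairing of the ground set partitioned into the `r`
consecutive blocks of sizes `n 0, …, n (r-1)`, and every pair of `π` meets two distinct
blocks (no pair is contained in a single block). -/
def Respects (r : ℕ) (n : ℕ → ℕ) (π : Finset (Finset ℕ)) : Prop :=
  IsPairingOn (off n r) π ∧
    ∀ pr ∈ π, ¬ ∃ i < r, ∀ x ∈ pr, off n i ≤ x ∧ x < off n (i + 1)

/-- The (finite) set `C₂(n₁ ⊗ … ⊗ n_r)` of all respecting pairings. -/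
def respPairings (r : ℕ) (n : ℕ → ℕ) : Finset (Finset (Finset ℕ)) := by
  classical exact ((Finset.range (off n r)).powerset.powerset).filter fun π => Respects r n π

/-- The pairing integral `∫_π F`: one integration variable per pair of `π`, the two
coordinates of each pair being set equal to that variable, integrated over `ℝ₊^{N/2}`. -/
def pairingIntegral (π : Finset (Finset ℕ)) (F : (ℕ → ℝ) → ℝ) : ℝ :=
  ∫ u : {pr // pr ∈ π} → ℝ,
    F (fun x => ∑ pr ∈ Finset.univ.filter (fun pr : {pr // pr ∈ π} => x ∈ pr.1), u pr)
    ∂ Measure.pi fun _ => mR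

/-- The product `f₁(t₁,…,t_{n₁}) f₂(t_{n₁+1},…,t_{n₁+n₂}) ⋯ f_r(…,t_n)` as a function of
`t : ℕ → ℝ` (blocks of sizes `n 0, …, n (r-1)`). -/
def prodBlocks (r : ℕ) (n : ℕ → ℕ) (f : ∀ i, (Fin (n i) → ℝ) → ℝ) : (ℕ → ℝ) → ℝ :=
  fun t => ∏ i ∈ Finset.range r, f i (fun j => t (off n i + (j : ℕ)))

/-- `P₂(σ) = {{n+1-i, n+σ(i)} : 1 ≤ i ≤ n}` as a pairing of `{0,…,2n-1}` (0-indexed). -/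
def P2set (n : ℕ) (σ : Equiv.Perm (Fin n)) : Finset (Finset ℕ) :=
  Finset.univ.image fun i : Fin n => ({n - 1 - (i : ℕ), n + ((σ i : Fin n) : ℕ)} : Finset ℕ)

/-- The map `φ` in the construction of `F(σ₁,σ₂,π')`: the unpaired points of the first two
blocks are mapped increasingly onto `{0,…,n₀+n₁-2p-1}` and every later point `x` is mapped
to `x - 2p`. -/
def phiF (n₀ n₁ p : ℕ) (σ₁ : Fin p → Fin n₀) (σ₂ : Fin p → Fin n₁) (x : ℕ) : ℕ :=
  if x < n₀ + n₁ then
    ((Finset.range x).filter fun y =>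
      (∀ i, ((σ₁ i : ℕ)) ≠ y) ∧ (∀ i, n₀ + (σ₂ i : ℕ) ≠ y)).card
  else x - 2 * p

/-- The pairing `F(σ₁,σ₂,π')` of the ground set `{0,…,N-1}`: it contains the `p` pairs
`{σ₁(i), n₀+σ₂(i)}`, and its remaining pairs are exactly the `φ`-preimages of the pairs
of `π'`. -/
def Fpair (N n₀ n₁ p : ℕ) (σ₁ : Fin p → Fin n₀) (σ₂ : Fin p → Fin n₁)
    (π' : Finset (Finset ℕ)) : Finset (Finset ℕ) :=
  (Finset.univ.image fun i : Fin p => ({(σ₁ i : ℕ), n₀ + (σ₂ i : ℕ)} : Finset ℕ)) ∪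
  π'.image fun pr => (Finset.range N).filter fun x =>
    (x < n₀ + n₁ → (∀ i, (σ₁ i : ℕ) ≠ x) ∧ (∀ i, n₀ + (σ₂ i : ℕ) ≠ x)) ∧
    phiF n₀ n₁ p σ₁ σ₂ x ∈ pr

/-- Block sizes `(n₁+n₂-2p, n₃, …, n_r)` after contracting the first two blocks. -/
def contractedSizes (n : ℕ → ℕ) (p : ℕ) : ℕ → ℕ
  | 0 => n 0 + n 1 - 2 * p
  | k + 1 => n (k + 2)

/-- Kernels `(f₁ ⊗_q^p f₂, f₃, …, f_r)` after contracting the first two kernels. -/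
def contractedKernels (n : ℕ → ℕ) (p : ℕ) (q : ℝ) (f : ∀ i, (Fin (n i) → ℝ) → ℝ) :
    ∀ j, (Fin (contractedSizes n p j) → ℝ) → ℝ
  | 0 => qcontr (n 0) (n 1) p q (f 0) (f 1)
  | k + 1 => f (k + 2)

end
noncomputable section

namespace Stmt12Aux

instance : SigmaFinite mR := by unfold mR; infer_instance
instance (n : ℕ) : SigmaFinite (μn n) := by unfold μn; infer_instance

def lowIdx (n : ℕ) (i : Fin n) : Fin (2 * n) := ⟨(i : ℕ), by have := i.2; omega⟩
def highIdx (n : ℕ) (i : Fin n) : Fin (2 * n) := ⟨n + (i : ℕ), by have := i.2; omega⟩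

lemma lowIdx_inj (n : ℕ) : Function.Injective (lowIdx n) := by
  intro a b h; apply Fin.ext; simpa [lowIdx, Fin.ext_iff] using h

lemma highIdx_inj (n : ℕ) : Function.Injective (highIdx n) := by
  intro a b h; apply Fin.ext
  have : n + (a : ℕ) = n + (b : ℕ) := by simpa [highIdx, Fin.ext_iff] using h
  omega

def sumEquiv (n : ℕ) : Fin n ⊕ Fin n ≃ Fin (2 * n) :=
  finSumFinEquiv.trans (finCongr (two_mul n).symm)

lemma sumEquiv_inl (n : ℕ) (i : Fin n) : sumEquiv n (Sum.inl i) = lowIdx n i := by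
  apply Fin.ext; simp [sumEquiv, lowIdx]

lemma sumEquiv_inr (n : ℕ) (i : Fin n) : sumEquiv n (Sum.inr i) = highIdx n i := by
  apply Fin.ext; simp [sumEquiv, highIdx]; omega

def blockPerm {n : ℕ} (σ₁ σ₂ : Equiv.Perm (Fin n)) : Equiv.Perm (Fin (2 * n)) :=
  (sumEquiv n).permCongr (Equiv.sumCongr σ₁ σ₂)

lemma blockPerm_low {n : ℕ} (σ₁ σ₂ : Equiv.Perm (Fin n)) (i : Fin n) :
    blockPerm σ₁ σ₂ (lowIdx n i) = lowIdx n (σ₁ i) := by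
  rw [← sumEquiv_inl n i, blockPerm, Equiv.permCongr_apply, Equiv.symm_apply_apply,
    Equiv.sumCongr_apply, Sum.map_inl, sumEquiv_inl]

lemma blockPerm_high {n : ℕ} (σ₁ σ₂ : Equiv.Perm (Fin n)) (i : Fin n) :
    blockPerm σ₁ σ₂ (highIdx n i) = highIdx n (σ₂ i) := by
  rw [← sumEquiv_inr n i, blockPerm, Equiv.permCongr_apply, Equiv.symm_apply_apply,
    Equiv.sumCongr_apply, Sum.map_inr, sumEquiv_inr]


lemma blockPerm_val_low {n : ℕ} (σ₁ σ₂ : Equiv.Perm (Fin n)) (x : Fin (2 * n))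
    (hx : (x : ℕ) < n) :
    ((blockPerm σ₁ σ₂ x : Fin (2 * n)) : ℕ) = ((σ₁ ⟨(x : ℕ), hx⟩ : Fin n) : ℕ) := by
  have h := blockPerm_low σ₁ σ₂ ⟨(x : ℕ), hx⟩
  have h2 : blockPerm σ₁ σ₂ x = lowIdx n (σ₁ ⟨(x : ℕ), hx⟩) := by
    rw [← h]; congr 1
  rw [h2]; rfl

lemma blockPerm_val_high {n : ℕ} (σ₁ σ₂ : Equiv.Perm (Fin n)) (x : Fin (2 * n))
    (hx : n ≤ (x : ℕ)) (hx2 : (x : ℕ) - n < n) :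
    ((blockPerm σ₁ σ₂ x : Fin (2 * n)) : ℕ) = n + ((σ₂ ⟨(x : ℕ) - n, hx2⟩ : Fin n) : ℕ) := by
  have h := blockPerm_high σ₁ σ₂ ⟨(x : ℕ) - n, hx2⟩
  have h2 : blockPerm σ₁ σ₂ x = highIdx n (σ₂ ⟨(x : ℕ) - n, hx2⟩) := by
    rw [← h]; congr 1; exact Fin.ext (by simp [highIdx]; omega)
  rw [h2]; rfl

lemma invCount_blockPerm {n : ℕ} (σ₁ σ₂ : Equiv.Perm (Fin n)) :
    invCount (fun i => blockPerm σ₁ σ₂ i)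
      = invCount (fun i => σ₁ i) + invCount (fun i => σ₂ i) := by
  classical
  unfold invCount
  have hmap1 : Function.Injective (Prod.map (lowIdx n) (lowIdx n)) :=
    Function.Injective.prodMap (lowIdx_inj n) (lowIdx_inj n)
  have hmap2 : Function.Injective (Prod.map (highIdx n) (highIdx n)) :=
    Function.Injective.prodMap (highIdx_inj n) (highIdx_inj n)
  rw [← Finset.card_image_of_injective
      (Finset.univ.filter fun ij : Fin n × Fin n => ij.1 < ij.2 ∧ σ₁ ij.2 < σ₁ ij.1) hmap1,
    ← Finset.card_image_of_injective
      (Finset.univ.filter fun ij : Fin n × Fin n => ij.1 < ij.2 ∧ σ₂ ij.2 < σ₂ ij.1) hmap2,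
    ← Finset.card_union_of_disjoint]
  · congr 1
    ext ⟨i, j⟩
    simp only [Finset.mem_union, Finset.mem_image, Finset.mem_filter, Finset.mem_univ, true_and,
      Prod.exists, Prod.map_apply, Prod.mk.injEq]
    constructor
    · rintro ⟨hij, hinv⟩
      have vij : (i : ℕ) < (j : ℕ) := hij
      have vinv : ((blockPerm σ₁ σ₂ j : Fin (2 * n)) : ℕ)
          < ((blockPerm σ₁ σ₂ i : Fin (2 * n)) : ℕ) := hinv
      rcases lt_or_ge (j : ℕ) n with hj | hj
      · have hi : (i : ℕ) < n := by omega
        left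
        refine ⟨⟨(i : ℕ), hi⟩, ⟨(j : ℕ), hj⟩, ⟨Fin.lt_def.mpr (by simpa using vij),
          Fin.lt_def.mpr ?_⟩, Fin.ext rfl, Fin.ext rfl⟩
        rw [blockPerm_val_low σ₁ σ₂ i hi, blockPerm_val_low σ₁ σ₂ j hj] at vinv
        exact vinv
      · rcases lt_or_ge (i : ℕ) n with hi | hi
        · exfalso
          have hj2 : (j : ℕ) - n < n := by have := j.2; omega
          rw [blockPerm_val_low σ₁ σ₂ i hi, blockPerm_val_high σ₁ σ₂ j hj hj2] at vinv
          have := (σ₁ ⟨(i : ℕ), hi⟩).2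
          omega
        · right
          have hi2 : (i : ℕ) - n < n := by have := i.2; omega
          have hj2 : (j : ℕ) - n < n := by have := j.2; omega
          rw [blockPerm_val_high σ₁ σ₂ i hi hi2, blockPerm_val_high σ₁ σ₂ j hj hj2] at vinv
          refine ⟨⟨(i : ℕ) - n, hi2⟩, ⟨(j : ℕ) - n, hj2⟩, ⟨Fin.lt_def.mpr (by simp; omega),
            Fin.lt_def.mpr (by simpa using by omega)⟩,
            Fin.ext (by simp [highIdx]; omega), Fin.ext (by simp [highIdx]; omega)⟩
    · rintro (⟨a, b, ⟨hab, hinv⟩, ha, hb⟩ | ⟨a, b, ⟨hab, hinv⟩, ha, hb⟩)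
      · have hia : (i : ℕ) = (a : ℕ) := by rw [← ha]; rfl
        have hjb : (j : ℕ) = (b : ℕ) := by rw [← hb]; rfl
        have hi : (i : ℕ) < n := by have := a.2; omega
        have hj : (j : ℕ) < n := by have := b.2; omega
        have vab : (a : ℕ) < (b : ℕ) := hab
        have vinv : ((σ₁ b : Fin n) : ℕ) < ((σ₁ a : Fin n) : ℕ) := hinv
        refine ⟨Fin.lt_def.mpr (by omega), Fin.lt_def.mpr ?_⟩
        rw [blockPerm_val_low σ₁ σ₂ i hi, blockPerm_val_low σ₁ σ₂ j hj]
        have h1 : (⟨(i : ℕ), hi⟩ : Fin n) = a := Fin.ext hia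
        have h2 : (⟨(j : ℕ), hj⟩ : Fin n) = b := Fin.ext hjb
        rw [h1, h2]; exact vinv
      · have hia : (i : ℕ) = n + (a : ℕ) := by rw [← ha]; rfl
        have hjb : (j : ℕ) = n + (b : ℕ) := by rw [← hb]; rfl
        have hi : n ≤ (i : ℕ) := by omega
        have hj : n ≤ (j : ℕ) := by omega
        have hi2 : (i : ℕ) - n < n := by have := a.2; omega
        have hj2 : (j : ℕ) - n < n := by have := b.2; omega
        have vab : (a : ℕ) < (b : ℕ) := hab
        have vinv : ((σ₂ b : Fin n) : ℕ) < ((σ₂ a : Fin n) : ℕ) := hinv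
        refine ⟨Fin.lt_def.mpr (by omega), Fin.lt_def.mpr ?_⟩
        rw [blockPerm_val_high σ₁ σ₂ i hi hi2, blockPerm_val_high σ₁ σ₂ j hj hj2]
        have h1 : (⟨(i : ℕ) - n, hi2⟩ : Fin n) = a := Fin.ext (show (i : ℕ) - n = (a : ℕ) by omega)
        have h2 : (⟨(j : ℕ) - n, hj2⟩ : Fin n) = b := Fin.ext (show (j : ℕ) - n = (b : ℕ) by omega)
        rw [h1, h2]; omega
  · rw [Finset.disjoint_left]
    rintro ⟨i, j⟩ h1 h2
    simp only [Finset.mem_image, Prod.exists, Prod.map_apply, Prod.mk.injEq] at h1 h2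
    obtain ⟨a, b, _, ha, _⟩ := h1
    obtain ⟨c, d, _, hc, _⟩ := h2
    rw [← hc] at ha
    have := (Fin.ext_iff).mp ha
    simp only [lowIdx, highIdx] at this
    have := a.2; have := c.2; omega


lemma cond_iff {n : ℕ} (σ : Equiv.Perm (Fin (2 * n)))
    (h : (Finset.univ.filter fun i : Fin (2 * n) => (i : ℕ) < n).image (fun i => σ i)
        = Finset.univ.filter fun i : Fin (2 * n) => (i : ℕ) < n) :
    ∀ i : Fin (2 * n), (i : ℕ) < n ↔ (σ i : ℕ) < n := by
  intro i
  constructor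
  · intro hi
    have : σ i ∈ (Finset.univ.filter fun j : Fin (2 * n) => (j : ℕ) < n) := by
      rw [← h]
      exact Finset.mem_image_of_mem _ (by simp [hi])
    simpa using this
  · intro hi
    have : σ i ∈ (Finset.univ.filter fun j : Fin (2 * n) => (j : ℕ) < n) := by simp [hi]
    rw [← h] at this
    obtain ⟨x, hx, hxe⟩ := Finset.mem_image.mp this
    have hxi : x = i := σ.injective hxe
    simp only [Finset.mem_filter, Finset.mem_univ, true_and] at hx
    omega

def lowPart {n : ℕ} (σ : Equiv.Perm (Fin (2 * n)))
    (h : ∀ i : Fin (2 * n), (i : ℕ) < n ↔ (σ i : ℕ) < n) : Equiv.Perm (Fin n) :=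
  Equiv.ofBijective (fun i => ⟨(σ (lowIdx n i) : ℕ), (h (lowIdx n i)).1 i.2⟩)
    (Finite.injective_iff_bijective.mp fun a b hab => by
      have hv : (σ (lowIdx n a) : ℕ) = (σ (lowIdx n b) : ℕ) := by
        simpa [Fin.ext_iff] using hab
      exact lowIdx_inj n (σ.injective (Fin.ext hv)))

def highPart {n : ℕ} (σ : Equiv.Perm (Fin (2 * n)))
    (h : ∀ i : Fin (2 * n), (i : ℕ) < n ↔ (σ i : ℕ) < n) : Equiv.Perm (Fin n) :=
  Equiv.ofBijective (fun i => ⟨(σ (highIdx n i) : ℕ) - n, by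
      have h1 : ¬ ((σ (highIdx n i) : ℕ) < n) := fun hc => by
        have h2 := (h (highIdx n i)).2 hc
        simp only [highIdx] at h2
        omega
      have h3 := (σ (highIdx n i)).2
      omega⟩)
    (Finite.injective_iff_bijective.mp fun a b hab => by
      have h1 : ∀ c : Fin n, ¬ ((σ (highIdx n c) : ℕ) < n) := fun c hc => by
        have h2 := (h (highIdx n c)).2 hc
        simp only [highIdx] at h2
        omega
      have hv : (σ (highIdx n a) : ℕ) - n = (σ (highIdx n b) : ℕ) - n := by
        simpa [Fin.ext_iff] using hab
      have ha := h1 a; have hb := h1 b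
      have hv2 : (σ (highIdx n a) : ℕ) = (σ (highIdx n b) : ℕ) := by omega
      exact highIdx_inj n (σ.injective (Fin.ext hv2)))

lemma blockPerm_lowPart_highPart {n : ℕ} (σ : Equiv.Perm (Fin (2 * n)))
    (h : ∀ i : Fin (2 * n), (i : ℕ) < n ↔ (σ i : ℕ) < n) :
    blockPerm (lowPart σ h) (highPart σ h) = σ := by
  apply Equiv.ext
  intro x
  rcases lt_or_ge (x : ℕ) n with hx | hx
  · apply Fin.ext
    rw [blockPerm_val_low _ _ x hx]
    rfl
  · have hx2 : (x : ℕ) - n < n := by have := x.2; omega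
    apply Fin.ext
    rw [blockPerm_val_high _ _ x hx hx2]
    have hxi : highIdx n ⟨(x : ℕ) - n, hx2⟩ = x := Fin.ext (by simp only [highIdx]; omega)
    show n + ((σ (highIdx n ⟨(x : ℕ) - n, hx2⟩) : ℕ) - n) = (σ x : ℕ)
    rw [hxi]
    have h1 : ¬ ((σ x : ℕ) < n) := fun hc => by have := (h x).2 hc; omega
    omega

lemma lowPart_blockPerm {n : ℕ} (σ₁ σ₂ : Equiv.Perm (Fin n))
    (h : ∀ i : Fin (2 * n), (i : ℕ) < n ↔ ((blockPerm σ₁ σ₂) i : ℕ) < n) :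
    lowPart (blockPerm σ₁ σ₂) h = σ₁ := by
  apply Equiv.ext
  intro i
  apply Fin.ext
  show ((blockPerm σ₁ σ₂ (lowIdx n i)) : ℕ) = (σ₁ i : ℕ)
  rw [blockPerm_low]
  rfl

lemma highPart_blockPerm {n : ℕ} (σ₁ σ₂ : Equiv.Perm (Fin n))
    (h : ∀ i : Fin (2 * n), (i : ℕ) < n ↔ ((blockPerm σ₁ σ₂) i : ℕ) < n) :
    highPart (blockPerm σ₁ σ₂) h = σ₂ := by
  apply Equiv.ext
  intro i
  apply Fin.ext
  show ((blockPerm σ₁ σ₂ (highIdx n i)) : ℕ) - n = (σ₂ i : ℕ)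
  rw [blockPerm_high]
  show (n + (σ₂ i : ℕ)) - n = (σ₂ i : ℕ)
  omega

lemma blockPerm_cond {n : ℕ} (σ₁ σ₂ : Equiv.Perm (Fin n)) :
    (Finset.univ.filter fun i : Fin (2 * n) => (i : ℕ) < n).image (fun i => blockPerm σ₁ σ₂ i)
      = Finset.univ.filter fun i : Fin (2 * n) => (i : ℕ) < n := by
  ext j
  simp only [Finset.mem_image, Finset.mem_filter, Finset.mem_univ, true_and]
  constructor
  · rintro ⟨i, hi, rfl⟩
    rw [blockPerm_val_low σ₁ σ₂ i hi]
    exact (σ₁ _).2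
  · intro hj
    refine ⟨lowIdx n (σ₁.symm ⟨j, hj⟩), (σ₁.symm ⟨j, hj⟩).2, ?_⟩
    rw [blockPerm_low, Equiv.apply_symm_apply]
    exact Fin.ext rfl

lemma sum_q_pow_filter (n : ℕ) (q : ℝ) :
    (∑ σ ∈ Finset.univ.filter (fun σ : Equiv.Perm (Fin (2 * n)) =>
        (Finset.univ.filter fun i : Fin (2 * n) => (i : ℕ) < n).image (fun i => σ i) =
          Finset.univ.filter fun i : Fin (2 * n) => (i : ℕ) < n),
      q ^ invCount (fun i => σ i))
    = (∑ π : Equiv.Perm (Fin n), q ^ invCount (fun i => π i)) ^ 2 := by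
  classical
  rw [sq, Finset.sum_mul_sum, ← Finset.sum_product']
  symm
  refine Finset.sum_bij'
    (fun (p : Equiv.Perm (Fin n) × Equiv.Perm (Fin n)) (_ : p ∈ Finset.univ ×ˢ Finset.univ) =>
      blockPerm p.1 p.2)
    (fun σ hσ => (lowPart σ (cond_iff σ (Finset.mem_filter.mp hσ).2),
                  highPart σ (cond_iff σ (Finset.mem_filter.mp hσ).2)))
    (fun p _ => Finset.mem_filter.mpr ⟨Finset.mem_univ _, blockPerm_cond p.1 p.2⟩)
    (fun σ hσ => Finset.mem_product.mpr ⟨Finset.mem_univ _, Finset.mem_univ _⟩)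
    (fun p hp => Prod.ext (lowPart_blockPerm p.1 p.2 (cond_iff _ (blockPerm_cond p.1 p.2))) (highPart_blockPerm p.1 p.2 (cond_iff _ (blockPerm_cond p.1 p.2))))
    (fun σ hσ => blockPerm_lowPart_highPart σ (cond_iff σ (Finset.mem_filter.mp hσ).2))
    (fun p hp => by rw [invCount_blockPerm p.1 p.2, pow_add])


def lowFun (n : ℕ) (s : Fin (2 * n) → ℝ) : Fin n → ℝ := fun i => s (lowIdx n i)
def highFun (n : ℕ) (s : Fin (2 * n) → ℝ) : Fin n → ℝ := fun i => s (highIdx n i)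

def prodEquiv (n : ℕ) : ((Fin n → ℝ) × (Fin n → ℝ)) ≃ᵐ (Fin (2 * n) → ℝ) :=
  (MeasurableEquiv.sumPiEquivProdPi (fun _ : Fin n ⊕ Fin n => ℝ)).symm.trans
    (MeasurableEquiv.piCongrLeft (fun _ : Fin (2 * n) => ℝ) (sumEquiv n))

lemma prodEquiv_measurePreserving (n : ℕ) :
    MeasurePreserving (prodEquiv n) ((μn n).prod (μn n)) (μn (2 * n)) := by
  have h1 : MeasurePreserving
      (MeasurableEquiv.sumPiEquivProdPi (fun _ : Fin n ⊕ Fin n => ℝ)).symm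
      ((μn n).prod (μn n)) (Measure.pi fun _ : Fin n ⊕ Fin n => mR) :=
    MeasureTheory.measurePreserving_sumPiEquivProdPi_symm (fun _ => mR)
  have h2 : MeasurePreserving
      (MeasurableEquiv.piCongrLeft (fun _ : Fin (2 * n) => ℝ) (sumEquiv n))
      (Measure.pi fun _ : Fin n ⊕ Fin n => mR) (μn (2 * n)) :=
    MeasureTheory.measurePreserving_piCongrLeft (fun _ => mR) (sumEquiv n)
  exact h2.comp h1

lemma prodEquiv_low (n : ℕ) (z : (Fin n → ℝ) × (Fin n → ℝ)) (i : Fin n) :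
    prodEquiv n z (lowIdx n i) = z.1 i := by
  show (MeasurableEquiv.piCongrLeft (fun _ : Fin (2 * n) => ℝ) (sumEquiv n))
    ((MeasurableEquiv.sumPiEquivProdPi (fun _ : Fin n ⊕ Fin n => ℝ)).symm z) (lowIdx n i) = z.1 i
  rw [← sumEquiv_inl n i, MeasurableEquiv.piCongrLeft_apply_apply]
  rfl

lemma prodEquiv_high (n : ℕ) (z : (Fin n → ℝ) × (Fin n → ℝ)) (i : Fin n) :
    prodEquiv n z (highIdx n i) = z.2 i := by
  show (MeasurableEquiv.piCongrLeft (fun _ : Fin (2 * n) => ℝ) (sumEquiv n))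
    ((MeasurableEquiv.sumPiEquivProdPi (fun _ : Fin n ⊕ Fin n => ℝ)).symm z) (highIdx n i) = z.2 i
  rw [← sumEquiv_inr n i, MeasurableEquiv.piCongrLeft_apply_apply]
  rfl

lemma prodEquiv_lowFun (n : ℕ) (z : (Fin n → ℝ) × (Fin n → ℝ)) :
    lowFun n (prodEquiv n z) = z.1 := funext fun i => prodEquiv_low n z i

lemma prodEquiv_highFun (n : ℕ) (z : (Fin n → ℝ) × (Fin n → ℝ)) :
    highFun n (prodEquiv n z) = z.2 := funext fun i => prodEquiv_high n z i

lemma prodEquiv_symm_apply (n : ℕ) (s : Fin (2 * n) → ℝ) :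
    (prodEquiv n).symm s = (lowFun n s, highFun n s) := by
  have h : prodEquiv n (lowFun n s, highFun n s) = s := by
    funext x
    rcases lt_or_ge (x : ℕ) n with hx | hx
    · have hxi : lowIdx n ⟨(x : ℕ), hx⟩ = x := Fin.ext rfl
      rw [← hxi, prodEquiv_low]
      rfl
    · have hx2 : (x : ℕ) - n < n := by have := x.2; omega
      have hxi : highIdx n ⟨(x : ℕ) - n, hx2⟩ = x := Fin.ext (by simp only [highIdx]; omega)
      rw [← hxi, prodEquiv_high]
      show highFun n s ⟨(x : ℕ) - n, hx2⟩ = s (highIdx n ⟨(x : ℕ) - n, hx2⟩)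
      rfl
  have h2 := congrArg (prodEquiv n).symm h
  rwa [MeasurableEquiv.symm_apply_apply] at h2

lemma ae_low_high (n : ℕ) (P : (Fin n → ℝ) → Prop) (hP : ∀ᵐ t ∂ μn n, P t) :
    ∀ᵐ s ∂ μn (2 * n), P (lowFun n s) ∧ P (highFun n s) := by
  have hprod : ∀ᵐ z ∂ (μn n).prod (μn n), P z.1 ∧ P z.2 :=
    (MeasureTheory.Measure.quasiMeasurePreserving_fst.ae hP).and
      (MeasureTheory.Measure.quasiMeasurePreserving_snd.ae hP)
  have hqmp := ((prodEquiv_measurePreserving n).symm (prodEquiv n)).quasiMeasurePreserving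
  have := hqmp.ae hprod
  refine this.mono fun s hs => ?_
  rwa [prodEquiv_symm_apply n s] at hs

lemma integral_low_high (n : ℕ) (g h : (Fin n → ℝ) → ℝ) :
    ∫ s, g (lowFun n s) * h (highFun n s) ∂ μn (2 * n)
      = (∫ t, g t ∂ μn n) * (∫ t, h t ∂ μn n) := by
  rw [← (prodEquiv_measurePreserving n).integral_comp (prodEquiv n).measurableEmbedding
      (fun s => g (lowFun n s) * h (highFun n s))]
  have : ∀ z : (Fin n → ℝ) × (Fin n → ℝ),
      g (lowFun n (prodEquiv n z)) * h (highFun n (prodEquiv n z)) = g z.1 * h z.2 := fun z => by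
    rw [prodEquiv_lowFun, prodEquiv_highFun]
  simp only [this]
  exact MeasureTheory.integral_prod_mul g h


lemma P2val {n : ℕ} (f : (Fin n → ℝ) → ℝ) (hsym : SymmFn f) (σ : Equiv.Perm (Fin (2 * n)))
    (hσ : ∀ i : Fin (2 * n), (i : ℕ) < n ↔ (σ i : ℕ) < n) :
    P2Integral (2 * n) σ
        (fun t => f (fun i => gv t (i : ℕ)) * f (fun i => gv t (n + (i : ℕ))))
        (fun t => f (fun i => gv t (i : ℕ)) * f (fun i => gv t (n + (i : ℕ))))
      = (∫ t, f t * f t ∂ μn n) ^ 2 := by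
  classical
  -- symm version of the block condition
  have hσs : ∀ i : Fin (2 * n), (i : ℕ) < n ↔ (σ.symm i : ℕ) < n := by
    intro i
    have h := hσ (σ.symm i)
    rw [Equiv.apply_symm_apply] at h
    exact h.symm
  -- the permutation underlying the pairing
  set ρ : Fin (2 * n) → Fin (2 * n) := fun i => (σ.symm i).rev with hρ
  have hρinj : Function.Injective ρ := fun x y hxy =>
    σ.symm.injective (Fin.rev_injective hxy)
  -- the low block is sent into the high block, reversed
  have hlowval : ∀ i : Fin n, n ≤ (ρ (lowIdx n i) : ℕ) ∧ (ρ (lowIdx n i) : ℕ) < 2 * n := by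
    intro i
    have hc : ((σ.symm (lowIdx n i)) : ℕ) < n := (hσs (lowIdx n i)).1 i.2
    have h1 := Fin.val_rev (σ.symm (lowIdx n i))
    have h2 := (ρ (lowIdx n i)).2
    constructor
    · show n ≤ ((σ.symm (lowIdx n i)).rev : ℕ)
      omega
    · exact h2
  have hhighval : ∀ i : Fin n, (ρ (highIdx n i) : ℕ) < n := by
    intro i
    have hc : ¬ ((σ.symm (highIdx n i) : ℕ) < n) := fun hcon => by
      have := (hσs (highIdx n i)).2 hcon
      simp only [highIdx] at this
      omega
    have h1 := Fin.val_rev (σ.symm (highIdx n i))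
    have h2 := (σ.symm (highIdx n i)).2
    show ((σ.symm (highIdx n i)).rev : ℕ) < n
    omega
  -- the two induced permutations of Fin n
  have ha2 : ∀ i : Fin n, (ρ (lowIdx n i) : ℕ) - n < n := fun i => by
    have := hlowval i; omega
  set a : Fin n → Fin n := fun i => ⟨(ρ (lowIdx n i) : ℕ) - n, ha2 i⟩ with haa
  have key_a : ∀ i : Fin n, ρ (lowIdx n i) = highIdx n (a i) := fun i =>
    Fin.ext (by simp only [highIdx, haa]; have := hlowval i; omega)
  have hainj : Function.Injective a := fun x y hxy => by
    have hv : (ρ (lowIdx n x) : ℕ) - n = (ρ (lowIdx n y) : ℕ) - n := by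
      simpa [haa, Fin.ext_iff] using hxy
    have h1 := hlowval x; have h2 := hlowval y
    exact lowIdx_inj n (hρinj (Fin.ext (by omega)))
  set b : Fin n → Fin n := fun i => ⟨(ρ (highIdx n i) : ℕ), hhighval i⟩ with hbb
  have key_b : ∀ i : Fin n, ρ (highIdx n i) = lowIdx n (b i) := fun i => Fin.ext rfl
  have hbinj : Function.Injective b := fun x y hxy => by
    have hv : (ρ (highIdx n x) : ℕ) = (ρ (highIdx n y) : ℕ) := by
      simpa [hbb, Fin.ext_iff] using hxy
    exact highIdx_inj n (hρinj (Fin.ext hv))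
  set πa : Equiv.Perm (Fin n) :=
    Equiv.ofBijective a (Finite.injective_iff_bijective.mp hainj) with hπa
  set πb : Equiv.Perm (Fin n) :=
    Equiv.ofBijective b (Finite.injective_iff_bijective.mp hbinj) with hπb
  -- the a.e. identity for the integrand
  have h1 := ae_low_high n
    (fun t => f (fun i => t (πa i)) = f t ∧ f (fun i => t (πb i)) = f t)
    ((hsym πa).and (hsym πb))
  have hcongr : ∀ᵐ s ∂ μn (2 * n),
      (f (fun i => gv s ((i : Fin n) : ℕ)) * f (fun i => gv s (n + ((i : Fin n) : ℕ)))) *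
        (f (fun i => gv (fun k : Fin (2 * n) => s ((σ.symm k).rev)) ((i : Fin n) : ℕ)) *
          f (fun i => gv (fun k : Fin (2 * n) => s ((σ.symm k).rev)) (n + ((i : Fin n) : ℕ))))
      = (f (lowFun n s) * f (lowFun n s)) * (f (highFun n s) * f (highFun n s)) := by
    refine h1.mono fun s hs => ?_
    have e1 : (fun i : Fin n => gv s (i : ℕ)) = lowFun n s := funext fun i => by
      unfold gv
      rw [dif_pos (show (i : ℕ) < 2 * n by have := i.2; omega)]
      rfl
    have e2 : (fun i : Fin n => gv s (n + (i : ℕ))) = highFun n s := funext fun i => by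
      unfold gv
      rw [dif_pos (show n + (i : ℕ) < 2 * n by have := i.2; omega)]
      rfl
    have e3 : (fun i : Fin n => gv (fun k : Fin (2 * n) => s ((σ.symm k).rev)) (i : ℕ))
        = fun i => highFun n s (πa i) := funext fun i => by
      unfold gv
      rw [dif_pos (show (i : ℕ) < 2 * n by have := i.2; omega)]
      exact congrArg s (key_a i)
    have e4 : (fun i : Fin n => gv (fun k : Fin (2 * n) => s ((σ.symm k).rev)) (n + (i : ℕ)))
        = fun i => lowFun n s (πb i) := funext fun i => by
      unfold gv
      rw [dif_pos (show n + (i : ℕ) < 2 * n by have := i.2; omega)]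
      exact congrArg s (key_b i)
    rw [e1, e2, e3, e4, hs.2.1, hs.1.2]
    ring
  unfold P2Integral
  rw [MeasureTheory.integral_congr_ae hcongr,
    integral_low_high n (fun t => f t * f t) (fun t => f t * f t), sq]

end Stmt12Aux

end

/-- For symmetric `f ∈ L²(ℝ₊ⁿ)` and `q ∈ (-1,1]`:
`Σ_{σ ∈ S_{2n}, σ({1,…,n}) = {1,…,n}} q^{inv σ} ∫_{P₂(σ)} (f⊗f) ⊗ (f⊗f) = ⟨f,f⟩_q²`. -/
theorem stmt12 (n : ℕ) (hn : 1 ≤ n) (q : ℝ) (hq₁ : -1 < q) (hq₂ : q ≤ 1)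
    (f : (Fin n → ℝ) → ℝ) (hf : MemLp f 2 (μn n)) (hsym : SymmFn f) :
    ∑ σ ∈ Finset.univ.filter (fun σ : Equiv.Perm (Fin (2 * n)) =>
        (Finset.univ.filter fun i : Fin (2 * n) => (i : ℕ) < n).image (fun i => σ i) =
          Finset.univ.filter fun i : Fin (2 * n) => (i : ℕ) < n),
      q ^ invCount (fun i => σ i) *
        P2Integral (2 * n) σ
          (fun t => f (fun i => gv t (i : ℕ)) * f (fun i => gv t (n + (i : ℕ))))
          (fun t => f (fun i => gv t (i : ℕ)) * f (fun i => gv t (n + (i : ℕ)))) =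
    (qInner n q f f) ^ 2 := by
  classical
  have hq : qInner n q f f
      = (∑ π : Equiv.Perm (Fin n), q ^ invCount (fun i => π i)) * (∫ t, f t * f t ∂ μn n) := by
    unfold qInner
    rw [Finset.sum_mul]
    refine Finset.sum_congr rfl fun π _ => ?_
    rw [MeasureTheory.integral_congr_ae ((hsym π).mono fun t ht => by rw [ht])]
  have hterm : ∀ σ ∈ Finset.univ.filter (fun σ : Equiv.Perm (Fin (2 * n)) =>
        (Finset.univ.filter fun i : Fin (2 * n) => (i : ℕ) < n).image (fun i => σ i) =
          Finset.univ.filter fun i : Fin (2 * n) => (i : ℕ) < n),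
      q ^ invCount (fun i => σ i) *
        P2Integral (2 * n) σ
          (fun t => f (fun i => gv t (i : ℕ)) * f (fun i => gv t (n + (i : ℕ))))
          (fun t => f (fun i => gv t (i : ℕ)) * f (fun i => gv t (n + (i : ℕ))))
      = q ^ invCount (fun i => σ i) * (∫ t, f t * f t ∂ μn n) ^ 2 := by
    intro σ hσ
    rw [Stmt12Aux.P2val f hsym σ (Stmt12Aux.cond_iff σ (Finset.mem_filter.mp hσ).2)]
  rw [Finset.sum_congr rfl hterm, ← Finset.sum_mul, Stmt12Aux.sum_q_pow_filter, hq]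
  ring
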